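/- Let A be a finite alphabet of size σ ≥ 2. For every n ≥ 2, the expected length of the maximal unbordered factor of a uniformly random string of length n over A satisfies (1/σ^n) · Σ_{S ∈ A^n} b(S) ≥ n·(1 − σ^{−1} − σ^{−2}). -/

import Mathlib

open List Finset Filter

/-- `S` is unbordered: it has no nonempty proper prefix that is also a suffix. -/
def Unbordered {α : Type*} (S : List α) : Prop :=
  ∀ B : List α, B ≠ [] → B.length < S.length → B <+: S → ¬ B <:+ S

/-- The length of the maximal unbordered factor of `S`. -/
noncomputable def muf {α : Type*} (S : List α) : ℕ :=
  sSup {k | ∃ F : List α, F <:+: S ∧ Unbordered F ∧ F.length = k}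

/-- `f` has a border of length `k` (index formulation). -/
def Brd {n σ : ℕ} (f : Fin n → Fin σ) (k : ℕ) : Prop :=
  0 < k ∧ ∃ h : k < n, ∀ i : ℕ, ∀ hi : i < k,
    f ⟨i, hi.trans h⟩ = f ⟨n - k + i, by omega⟩

lemma unbordered_ofFn_iff {n σ : ℕ} (f : Fin n → Fin σ) :
    Unbordered (List.ofFn f) ↔ ∀ k, ¬ Brd f k := by
  constructor
  · intro hU k ⟨hk0, hkn, hb⟩
    set S := List.ofFn f with hS
    have hlen : S.length = n := by simp [hS]
    apply hU (S.take k) (by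
      simp [List.take_eq_nil_iff, hS, List.ofFn_eq_nil_iff]
      omega) (by simp [hlen]; omega) (List.take_prefix _ _)
    rw [List.suffix_iff_eq_drop, List.length_take, hlen]
    have : min k n = k := by omega
    rw [this]
    apply List.ext_getElem
    · simp [hlen]; omega
    · intro i h1 h2
      rw [List.getElem_take, List.getElem_drop]
      have hi : i < k := by simp [hlen] at h1; omega
      simpa [hS, List.getElem_ofFn] using hb i hi
  · intro h B hBne hBlt hp hs
    set S := List.ofFn f with hS
    have hlen : S.length = n := by simp [hS]
    set k := B.length with hk
    refine h k ⟨by simpa [hk, List.length_pos_iff_ne_nil] using hBne, by omega, ?_⟩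
    intro i hi
    have hBt : B = S.take k := List.prefix_iff_eq_take.mp hp
    have hBd : B = S.drop (n - k) := by
      rw [List.suffix_iff_eq_drop] at hs; rw [hs, hlen]
    have := congrArg (fun L => L[i]?) (hBt.symm.trans hBd)
    simp only [List.getElem?_take, List.getElem?_drop] at this
    have h1 : S[i]? = S[n - k + i]? := by
      simpa [hi] using this
    have hiS : i < S.length := by omega
    have hiS2 : n - k + i < S.length := by omega
    rw [List.getElem?_eq_getElem hiS, List.getElem?_eq_getElem hiS2] at h1
    have h2 : S[i] = S[n - k + i] := by exact_mod_cast Option.some_injective _ h1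
    simpa [hS, List.getElem_ofFn] using h2

lemma muf_of_unbordered {n σ : ℕ} (hn : 0 < n) (f : Fin n → Fin σ)
    (h : Unbordered (List.ofFn f)) : (n : ℝ) ≤ (muf (List.ofFn f) : ℝ) := by
  have hmem : n ∈ {k | ∃ F : List (Fin σ), F <:+: List.ofFn f ∧ Unbordered F ∧ F.length = k} :=
    ⟨List.ofFn f, List.infix_refl _, h, by simp⟩
  have hbdd : BddAbove {k | ∃ F : List (Fin σ), F <:+: List.ofFn f ∧ Unbordered F ∧ F.length = k} := by
    refine ⟨n, fun k ⟨F, hF, _, hl⟩ => ?_⟩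
    have := hF.length_le
    simp at this; omega
  exact_mod_cast Nat.cast_le.mpr (le_csSup hbdd hmem)

lemma brd_one {n σ : ℕ} (hn : 2 ≤ n) (f : Fin n → Fin σ) :
    Brd f 1 ↔ f ⟨0, by omega⟩ = f ⟨n - 1, by omega⟩ := by
  constructor
  · rintro ⟨-, h1, hb⟩
    simpa using hb 0 one_pos
  · intro h
    exact ⟨one_pos, by omega, fun i hi => by
      have : i = 0 := by omega
      subst this; simpa using h⟩

lemma brd_halve {n σ : ℕ} (f : Fin n → Fin σ) (k : ℕ) (hk : Brd f k) (h2 : n < 2 * k) :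
    Brd f (2 * k - n) := by
  obtain ⟨hk0, hkn, hb⟩ := hk
  refine ⟨by omega, by omega, fun i hi => ?_⟩
  have e1 := hb i (by omega)
  have e2 := hb (n - k + i) (by omega)
  have : f ⟨n - k + (n - k + i), by omega⟩ = f ⟨n - (2 * k - n) + i, by omega⟩ := by
    congr 1; ext; simp; omega
  rw [e1, e2, this]

lemma card_pair_eq {m σ : ℕ} (a b : Fin m) (hab : a ≠ b) :
    (Finset.univ.filter fun g : Fin m → Fin σ => g a = g b).card = σ ^ (m - 1) := by
  classical
  have e : {g : Fin m → Fin σ // g a = g b} ≃ ({x : Fin m // x ≠ b} → Fin σ) := by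
    refine ⟨fun g x => g.1 x.1, fun h => ⟨fun x => if hx : x = b then h ⟨a, hab⟩ else h ⟨x, hx⟩, by simp [hab]⟩, ?_, ?_⟩
    · rintro ⟨g, hg⟩
      ext x
      by_cases hx : x = b <;> simp [hx, hg]
    · intro h
      ext x
      simp [x.2]
  have h1 : (Finset.univ.filter fun g : Fin m → Fin σ => g a = g b).card
      = Fintype.card {g : Fin m → Fin σ // g a = g b} := (Fintype.card_subtype _).symm
  rw [h1, Fintype.card_congr e, Fintype.card_fun]
  congr 1
  · simp
  · have : Fintype.card {x : Fin m // ¬ x = b} = m - 1 := by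
      rw [Fintype.card_subtype_compl]
      simp [Fintype.card_subtype_eq]
    simpa using this

lemma card_T {σ n k : ℕ} (hk2 : 2 ≤ k) (hkn : 2 * k ≤ n) :
    (Finset.univ.filter fun g : Fin (n - k) → Fin σ =>
      g ⟨0, by omega⟩ ≠ g ⟨k - 1, by omega⟩).card = σ ^ (n - k) - σ ^ (n - k - 1) := by
  classical
  have p0 : 0 < n - k := by omega
  have p1 : k - 1 < n - k := by omega
  have h2 : (Finset.univ.filter fun g : Fin (n - k) → Fin σ =>
      g ⟨0, p0⟩ = g ⟨k - 1, p1⟩).card = σ ^ (n - k - 1) := by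
    have := card_pair_eq (σ := σ) (⟨0, p0⟩ : Fin (n - k)) ⟨k - 1, p1⟩
      (by intro h; rw [Fin.mk.injEq] at h; omega)
    convert this using 2
  have h3 : (Finset.univ : Finset (Fin (n - k) → Fin σ)).card = σ ^ (n - k) := by
    simp [Fintype.card_fun]
  have h1 := Finset.card_filter_add_card_filter_not
    (s := (Finset.univ : Finset (Fin (n - k) → Fin σ)))
    (p := fun g => g ⟨0, p0⟩ = g ⟨k - 1, p1⟩)
  rw [h2, h3] at h1
  have h4 := Nat.eq_sub_of_add_eq' h1
  convert h4 using 2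

open Classical in
lemma card_Dk {σ n : ℕ} (k : ℕ) (hk2 : 2 ≤ k) (hkn : 2 * k ≤ n) :
    (Finset.univ.filter fun f : Fin n → Fin σ =>
      Brd f k ∧ ∀ (h0 : 0 < n) (h1 : k - 1 < n), f ⟨0, h0⟩ ≠ f ⟨k - 1, h1⟩).card
      ≤ σ ^ (n - k) - σ ^ (n - k - 1) := by
  classical
  have hn0 : 0 < n := by omega
  rw [← card_T (σ := σ) hk2 hkn]
  apply Finset.card_le_card_of_injOn
    (fun f (j : Fin (n - k)) => f (Fin.castLE (by omega) j))
  · intro f hf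
    simp only [Finset.mem_coe, Finset.mem_filter, Finset.mem_univ, true_and] at hf ⊢
    have := hf.2 hn0 (by omega)
    simpa [Fin.castLE] using this
  · intro f1 h1 f2 h2 heq
    simp only [Finset.mem_coe, Finset.mem_filter, Finset.mem_univ, true_and] at h1 h2
    obtain ⟨⟨-, hkn2, hb1⟩, -⟩ := h1
    obtain ⟨⟨-, hkn3, hb2⟩, -⟩ := h2
    funext x
    by_cases hx : (x : ℕ) < n - k
    · have := congrFun heq ⟨x, hx⟩
      simpa [Fin.castLE] using this
    · have hxi : (x : ℕ) - (n - k) < k := by omega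
      have e1 := hb1 ((x : ℕ) - (n - k)) hxi
      have e2 := hb2 ((x : ℕ) - (n - k)) hxi
      have hxeq : (⟨n - k + ((x : ℕ) - (n - k)), by omega⟩ : Fin n) = x := by
        ext; simp; omega
      rw [hxeq] at e1 e2
      have := congrFun heq ⟨(x : ℕ) - (n - k), by omega⟩
      simp only [Fin.castLE] at this
      rw [← e1, ← e2]
      exact this

lemma bordered_cases {σ n : ℕ} (hn : 2 ≤ n) (f : Fin n → Fin σ) (hB : ∃ k, Brd f k)
    (hne : f ⟨0, by omega⟩ ≠ f ⟨n - 1, by omega⟩) :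
    ∃ k, 2 ≤ k ∧ 2 * k ≤ n ∧ Brd f k ∧
      ∀ (h0 : 0 < n) (h1 : k - 1 < n), f ⟨0, h0⟩ ≠ f ⟨k - 1, h1⟩ := by
  classical
  set k0 := Nat.find hB with hk0def
  have hk0 : Brd f k0 := Nat.find_spec hB
  have hmin : ∀ j, j < k0 → ¬ Brd f j := fun j hj => Nat.find_min hB hj
  obtain ⟨hpos, hlt, hb⟩ := hk0
  have hk1 : k0 ≠ 1 := by
    intro h1
    apply hne
    have := (brd_one hn f).mp (by rw [← h1]; exact ⟨hpos, hlt, hb⟩)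
    exact this
  have h2k : 2 * k0 ≤ n := by
    by_contra h
    push_neg at h
    have hb2 : Brd f (2 * k0 - n) := brd_halve f k0 ⟨hpos, hlt, hb⟩ h
    exact hmin _ (by omega) hb2
  refine ⟨k0, by omega, h2k, ⟨hpos, hlt, hb⟩, ?_⟩
  intro h0 h1 heq
  apply hne
  have := hb (k0 - 1) (by omega)
  have hidx : (⟨n - k0 + (k0 - 1), by omega⟩ : Fin n) = ⟨n - 1, by omega⟩ := by
    ext; simp; omega
  rw [hidx] at this
  rw [← this, ← heq]

open Classical in
lemma card_bordered {σ n : ℕ} (hσ : 2 ≤ σ) (hn : 2 ≤ n) :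
    ((Finset.univ.filter fun f : Fin n → Fin σ => ∃ k, Brd f k).card : ℝ)
      ≤ (σ : ℝ) ^ (n - 1) + (σ : ℝ) ^ (n - 2) := by
  have hσ1 : (1 : ℝ) ≤ (σ : ℝ) := by exact_mod_cast (by omega : 1 ≤ σ)
  set D1 := Finset.univ.filter fun f : Fin n → Fin σ =>
    f ⟨0, by omega⟩ = f ⟨n - 1, by omega⟩ with hD1
  set D2 := Finset.univ.filter fun f : Fin n → Fin σ =>
    (∃ k, Brd f k) ∧ f ⟨0, by omega⟩ ≠ f ⟨n - 1, by omega⟩ with hD2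
  have hsub : (Finset.univ.filter fun f : Fin n → Fin σ => ∃ k, Brd f k) ⊆ D1 ∪ D2 := by
    intro f hf
    rw [Finset.mem_filter] at hf
    rw [Finset.mem_union, hD1, hD2, Finset.mem_filter, Finset.mem_filter]
    by_cases h : f ⟨0, by omega⟩ = f ⟨n - 1, by omega⟩
    · exact Or.inl ⟨Finset.mem_univ _, h⟩
    · exact Or.inr ⟨Finset.mem_univ _, hf.2, h⟩
  have hcard1 : (D1.card : ℝ) = (σ : ℝ) ^ (n - 1) := by
    have := card_pair_eq (σ := σ) (⟨0, by omega⟩ : Fin n) ⟨n - 1, by omega⟩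
      (by intro h; rw [Fin.mk.injEq] at h; omega)
    have hD1card : D1.card = σ ^ (n - 1) := by rw [hD1]; convert this using 2
    rw [hD1card]; push_cast; ring
  have hcard2 : (D2.card : ℝ) ≤ (σ : ℝ) ^ (n - 2) := by
    -- D2 is covered by the union of Dk over k in Icc 2 (n/2)
    have hsub2 : D2 ⊆ (Finset.Icc 2 (n / 2)).biUnion fun k =>
        Finset.univ.filter fun f : Fin n → Fin σ =>
          Brd f k ∧ ∀ (h0 : 0 < n) (h1 : k - 1 < n), f ⟨0, h0⟩ ≠ f ⟨k - 1, h1⟩ := by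
      intro f hf
      rw [hD2, Finset.mem_filter] at hf
      obtain ⟨-, hB, hne⟩ := hf
      obtain ⟨k, hk2, hk2n, hbrd, hne2⟩ := bordered_cases hn f hB hne
      rw [Finset.mem_biUnion]
      exact ⟨k, by rw [Finset.mem_Icc]; omega,
        by rw [Finset.mem_filter]; exact ⟨Finset.mem_univ _, hbrd, hne2⟩⟩
    have hstep : (D2.card : ℝ) ≤ ∑ k ∈ Finset.Icc 2 (n / 2),
        ((σ : ℝ) ^ (n - k) - (σ : ℝ) ^ (n - k - 1)) := by
      calc (D2.card : ℝ) ≤ ((((Finset.Icc 2 (n / 2)).biUnion fun k =>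
          Finset.univ.filter fun f : Fin n → Fin σ =>
            Brd f k ∧ ∀ (h0 : 0 < n) (h1 : k - 1 < n),
              f ⟨0, h0⟩ ≠ f ⟨k - 1, h1⟩).card : ℕ) : ℝ) := by
            exact_mod_cast Finset.card_le_card hsub2
      _ ≤ ((∑ k ∈ Finset.Icc 2 (n / 2), (Finset.univ.filter fun f : Fin n → Fin σ =>
            Brd f k ∧ ∀ (h0 : 0 < n) (h1 : k - 1 < n),
              f ⟨0, h0⟩ ≠ f ⟨k - 1, h1⟩).card : ℕ) : ℝ) := by
            exact_mod_cast Finset.card_biUnion_le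
      _ = ∑ k ∈ Finset.Icc 2 (n / 2), (((Finset.univ.filter fun f : Fin n → Fin σ =>
            Brd f k ∧ ∀ (h0 : 0 < n) (h1 : k - 1 < n),
              f ⟨0, h0⟩ ≠ f ⟨k - 1, h1⟩).card : ℕ) : ℝ) := by push_cast; ring
      _ ≤ ∑ k ∈ Finset.Icc 2 (n / 2), ((σ : ℝ) ^ (n - k) - (σ : ℝ) ^ (n - k - 1)) := by
            apply Finset.sum_le_sum
            intro k hk
            rw [Finset.mem_Icc] at hk
            have hkk : 2 * k ≤ n := by
              have ha := hk.2
              have hb := Nat.div_mul_le_self n 2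
              clear * - ha hb
              omega
            have h1 := card_Dk (σ := σ) k hk.1 hkk
            have h2 : ((σ ^ (n - k) - σ ^ (n - k - 1) : ℕ) : ℝ)
                = (σ : ℝ) ^ (n - k) - (σ : ℝ) ^ (n - k - 1) := by
              have : σ ^ (n - k - 1) ≤ σ ^ (n - k) :=
                Nat.pow_le_pow_right (by clear * - hσ; omega) (Nat.sub_le _ 1)
              push_cast [Nat.cast_sub this]; ring
            rw [← h2]
            exact_mod_cast h1
    refine hstep.trans ?_
    -- telescoping
    rcases le_or_gt (n / 2) 1 with hm | hm
    · have : Finset.Icc 2 (n / 2) = ∅ := by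
        apply Finset.Icc_eq_empty; omega
      rw [this]
      simp
    · have hIcc : Finset.Icc 2 (n / 2) = Finset.Ico 2 (n / 2 + 1) := by
        rw [Finset.Ico_add_one_right_eq_Icc]
      rw [hIcc, Finset.sum_Ico_eq_sum_range]
      have hrw : ∀ j ∈ Finset.range (n / 2 + 1 - 2),
          ((σ : ℝ) ^ (n - (2 + j)) - (σ : ℝ) ^ (n - (2 + j) - 1))
            = ((σ : ℝ) ^ (n - 2 - j) - (σ : ℝ) ^ (n - 2 - (j + 1))) := by
        intro j hj
        have e1 : n - (2 + j) = n - 2 - j := by omega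
        rw [e1]
        have e2 : n - 2 - j - 1 = n - 2 - (j + 1) := by omega
        rw [e2]
      rw [Finset.sum_congr rfl hrw]
      rw [Finset.sum_range_sub' (fun j => (σ : ℝ) ^ (n - 2 - j))]
      have h0 : (0 : ℝ) ≤ (σ : ℝ) ^ (n - 2 - (n / 2 + 1 - 2)) := by positivity
      have e0 : n - 2 - 0 = n - 2 := Nat.sub_zero _
      rw [e0]
      linarith
  calc ((Finset.univ.filter fun f : Fin n → Fin σ => ∃ k, Brd f k).card : ℝ)
      ≤ ((D1 ∪ D2).card : ℝ) := by exact_mod_cast Finset.card_le_card hsub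
    _ ≤ (D1.card : ℝ) + (D2.card : ℝ) := by exact_mod_cast Finset.card_union_le D1 D2
    _ ≤ (σ : ℝ) ^ (n - 1) + (σ : ℝ) ^ (n - 2) := by rw [hcard1]; linarith

theorem expected_muf_simple_bound (σ n : ℕ) (hσ : 2 ≤ σ) (hn : 2 ≤ n) :
    (1 / (σ : ℝ) ^ n) * ∑ f : Fin n → Fin σ, (muf (List.ofFn f) : ℝ) ≥
      (n : ℝ) * (1 - (σ : ℝ)⁻¹ - ((σ : ℝ) ^ 2)⁻¹) := by
  classical
  have hσR : (0 : ℝ) < (σ : ℝ) := by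
    have : (0 : ℕ) < σ := by omega
    exact_mod_cast this
  set U := Finset.univ.filter fun f : Fin n → Fin σ => Unbordered (List.ofFn f) with hU
  have hsum : (n : ℝ) * U.card ≤ ∑ f : Fin n → Fin σ, (muf (List.ofFn f) : ℝ) := by
    calc (n : ℝ) * U.card = ∑ _f ∈ U, (n : ℝ) := by
          rw [Finset.sum_const, nsmul_eq_mul]; ring
      _ ≤ ∑ f ∈ U, (muf (List.ofFn f) : ℝ) := by
          apply Finset.sum_le_sum
          intro f hf
          rw [hU, Finset.mem_filter] at hf
          exact muf_of_unbordered (by omega) f hf.2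
      _ ≤ ∑ f : Fin n → Fin σ, (muf (List.ofFn f) : ℝ) := by
          apply Finset.sum_le_sum_of_subset_of_nonneg (Finset.subset_univ _)
          intro f _ _
          positivity
  have hUeq : U = Finset.univ.filter fun f : Fin n → Fin σ => ¬ ∃ k, Brd f k := by
    ext f
    rw [hU, Finset.mem_filter, Finset.mem_filter]
    constructor
    · rintro ⟨h1, h2⟩
      rw [unbordered_ofFn_iff] at h2
      exact ⟨h1, by push_neg; exact h2⟩
    · rintro ⟨h1, h2⟩
      push_neg at h2
      exact ⟨h1, (unbordered_ofFn_iff f).mpr h2⟩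
  have hcompl := Finset.card_filter_add_card_filter_not
    (s := (Finset.univ : Finset (Fin n → Fin σ))) (p := fun f => ∃ k, Brd f k)
  have huniv : (Finset.univ : Finset (Fin n → Fin σ)).card = σ ^ n := by
    simp [Fintype.card_fun]
  have hD := card_bordered (σ := σ) (n := n) hσ hn
  have hcardU : (σ : ℝ) ^ n - (σ : ℝ) ^ (n - 1) - (σ : ℝ) ^ (n - 2) ≤ (U.card : ℝ) := by
    have hUcard : (U.card : ℝ) = ((Finset.univ.filter fun f : Fin n → Fin σ =>
        ¬ ∃ k, Brd f k).card : ℝ) := by rw [hUeq]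
    have hc : ((Finset.univ.filter fun f : Fin n → Fin σ => ∃ k, Brd f k).card : ℝ)
        + ((Finset.univ.filter fun f : Fin n → Fin σ => ¬ ∃ k, Brd f k).card : ℝ)
        = (σ : ℝ) ^ n := by
      have h := hcompl
      rw [huniv] at h
      exact_mod_cast h
    rw [hUcard]
    linarith
  have hkey : (n : ℝ) * ((σ : ℝ) ^ n - (σ : ℝ) ^ (n - 1) - (σ : ℝ) ^ (n - 2))
      ≤ ∑ f : Fin n → Fin σ, (muf (List.ofFn f) : ℝ) := by
    refine le_trans ?_ hsum
    apply mul_le_mul_of_nonneg_left hcardU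
    positivity
  rw [ge_iff_le]
  have hpow : (0 : ℝ) < (σ : ℝ) ^ n := by positivity
  have hid : (n : ℝ) * (1 - (σ : ℝ)⁻¹ - ((σ : ℝ) ^ 2)⁻¹)
      = (1 / (σ : ℝ) ^ n) * ((n : ℝ) * ((σ : ℝ) ^ n - (σ : ℝ) ^ (n - 1) - (σ : ℝ) ^ (n - 2))) := by
    obtain ⟨m, rfl⟩ : ∃ m, n = m + 2 := ⟨n - 2, by omega⟩
    have e1 : m + 2 - 1 = m + 1 := rfl
    have e2 : m + 2 - 2 = m := rfl
    rw [e1, e2]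
    have p1 : (σ : ℝ) ^ (m + 2) = (σ : ℝ) ^ m * (σ : ℝ) ^ 2 := by ring
    have p2 : (σ : ℝ) ^ (m + 1) = (σ : ℝ) ^ m * (σ : ℝ) := by ring
    rw [p1, p2]
    field_simp
  rw [hid]
  apply mul_le_mul_of_nonneg_left hkey
  positivity
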